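/- arXiv:1809.02027 — 3 statements merged into one kernel-verified Lean document; each statement's English description precedes it below -/
import Mathlib

section
/- The Airy-type oscillatory integral is uniformly bounded: there exists a constant C > 0 such that for every real a, |∫_ℝ exp(i(a·η + η³)) dη| ≤ C, where the integral is understood as an improper (oscillatory) integral. -/
open MeasureTheory Complex Filter Set intervalIntegral

namespace AiryAux

noncomputable def f (a η : ℝ) : ℂ := Complex.exp (Complex.I * ((a : ℂ) * η + (η : ℂ) ^ 3))

noncomputable def u (a η : ℝ) : ℂ := (Complex.I * (3 * (η : ℂ) ^ 2 + (a : ℂ)))⁻¹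

noncomputable def u' (a η : ℝ) : ℂ :=
  -(Complex.I * (6 * (η : ℂ))) / (Complex.I * (3 * (η : ℂ) ^ 2 + (a : ℂ))) ^ 2

lemma f_cont (a : ℝ) : Continuous (f a) := by
  unfold f; fun_prop

lemma f_intble (a c d : ℝ) : IntervalIntegrable (f a) volume c d :=
  (f_cont a).intervalIntegrable c d

lemma phase_eq (a η : ℝ) :
    Complex.I * ((a : ℂ) * η + (η : ℂ) ^ 3) = ((a * η + η ^ 3 : ℝ) : ℂ) * Complex.I := by
  push_cast; ring

lemma norm_f (a η : ℝ) : ‖f a η‖ = 1 := by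
  unfold f
  rw [phase_eq, Complex.norm_exp]
  simp only [Complex.mul_re, Complex.ofReal_re, Complex.ofReal_im, Complex.I_re,
    Complex.I_im, mul_zero, mul_one, zero_mul, sub_zero, zero_sub]
  norm_num

lemma p_eq (a η : ℝ) : 3 * (η : ℂ) ^ 2 + (a : ℂ) = ((3 * η ^ 2 + a : ℝ) : ℂ) := by
  push_cast; ring

lemma f_deriv (a η : ℝ) :
    HasDerivAt (f a) (Complex.I * (3 * (η : ℂ) ^ 2 + (a : ℂ)) * f a η) η := by
  have h1 : HasDerivAt (fun z : ℂ => Complex.exp (Complex.I * ((a : ℂ) * z + z ^ 3)))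
      (Complex.exp (Complex.I * ((a : ℂ) * (η:ℂ) + (η:ℂ) ^ 3))
        * (Complex.I * ((a : ℂ) * 1 + 3 * (η:ℂ) ^ 2))) (η : ℂ) := by
    have hp : HasDerivAt (fun z : ℂ => z ^ 3) (3 * (η:ℂ) ^ 2) (η:ℂ) := by
      simpa using hasDerivAt_pow 3 (η:ℂ)
    exact ((((hasDerivAt_id (η:ℂ)).const_mul (a:ℂ)).add hp).const_mul Complex.I).cexp
  have h2 := h1.comp_ofReal
  convert h2 using 1
  · rfl
  unfold f
  ring

lemma u_deriv (a η : ℝ) (h : 3 * η ^ 2 + a ≠ 0) : HasDerivAt (u a) (u' a η) η := by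
  have hne : Complex.I * (3 * (η : ℂ) ^ 2 + (a : ℂ)) ≠ 0 := by
    rw [p_eq]
    exact mul_ne_zero Complex.I_ne_zero (Complex.ofReal_ne_zero.mpr h)
  have hp : HasDerivAt (fun z : ℂ => z ^ 2) (2 * (η:ℂ)) (η:ℂ) := by
    simpa using hasDerivAt_pow 2 (η:ℂ)
  have h1 : HasDerivAt (fun z : ℂ => (Complex.I * (3 * z ^ 2 + (a : ℂ)))⁻¹)
      (-(Complex.I * (3 * (2 * (η:ℂ)))) / (Complex.I * (3 * (η:ℂ) ^ 2 + (a:ℂ))) ^ 2)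
      (η : ℂ) := by
    have h0 : HasDerivAt (fun z : ℂ => Complex.I * (3 * z ^ 2 + (a : ℂ)))
        (Complex.I * (3 * (2 * (η:ℂ)))) (η:ℂ) := by
      exact (((hp.const_mul (3:ℂ)).add_const (a:ℂ)).const_mul Complex.I)
    exact h0.inv hne
  have h2 := h1.comp_ofReal
  convert h2 using 1
  · rfl
  unfold u'
  ring

lemma norm_u (a η : ℝ) : ‖u a η‖ = |3 * η ^ 2 + a|⁻¹ := by
  unfold u
  rw [p_eq]
  simp only [norm_inv, norm_mul, Complex.norm_I, Complex.norm_real, Real.norm_eq_abs,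
    one_mul]

lemma norm_u' (a η : ℝ) : ‖u' a η‖ = |6 * η| / (3 * η ^ 2 + a) ^ 2 := by
  unfold u'
  rw [p_eq, show Complex.I * (6 * (η:ℂ)) = ((6 * η : ℝ) : ℂ) * Complex.I by push_cast; ring]
  simp only [norm_div, norm_neg, norm_mul, norm_pow,
    Complex.norm_I, Complex.norm_real, Real.norm_eq_abs, one_mul, mul_one]
  rw [_root_.sq_abs, abs_mul]

end AiryAux
namespace AiryAux

open MeasureTheory Complex Filter Set intervalIntegral

lemma u'_contOn (a : ℝ) {s : Set ℝ} (hne : ∀ η ∈ s, 3 * η ^ 2 + a ≠ 0) :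
    ContinuousOn (u' a) s := by
  unfold u'
  apply ContinuousOn.div
  · fun_prop
  · fun_prop
  · intro x hx
    apply pow_ne_zero
    rw [p_eq]
    exact mul_ne_zero Complex.I_ne_zero (Complex.ofReal_ne_zero.mpr (hne x hx))

lemma ibp (a c d : ℝ) (hcd : c ≤ d) (hne : ∀ η ∈ Icc c d, 3 * η ^ 2 + a ≠ 0) :
    ∫ η in c..d, f a η
      = u a d * f a d - u a c * f a c - ∫ η in c..d, u' a η * f a η := by
  have huIcc : uIcc c d = Icc c d := uIcc_of_le hcd
  have hu : ∀ η ∈ uIcc c d, HasDerivAt (u a) (u' a η) η := fun η hη =>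
    u_deriv a η (hne η (huIcc ▸ hη))
  have hv : ∀ η ∈ uIcc c d,
      HasDerivAt (f a) (Complex.I * (3 * (η : ℂ) ^ 2 + (a : ℂ)) * f a η) η :=
    fun η _ => f_deriv a η
  have hu' : IntervalIntegrable (u' a) volume c d := by
    apply ContinuousOn.intervalIntegrable
    rw [huIcc]; exact u'_contOn a hne
  have hv' : IntervalIntegrable
      (fun η : ℝ => Complex.I * (3 * (η : ℂ) ^ 2 + (a : ℂ)) * f a η) volume c d := by
    apply Continuous.intervalIntegrable
    have := f_cont a
    unfold f at this ⊢
    fun_prop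
  have H := intervalIntegral.integral_mul_deriv_eq_deriv_mul hu hv hu' hv'
  have Hc : ∫ η in c..d, f a η
      = ∫ η in c..d, u a η * (Complex.I * (3 * (η : ℂ) ^ 2 + (a : ℂ)) * f a η) := by
    apply intervalIntegral.integral_congr
    intro η hη
    have hz : Complex.I * (3 * (η : ℂ) ^ 2 + (a : ℂ)) ≠ 0 := by
      rw [p_eq]
      exact mul_ne_zero Complex.I_ne_zero
        (Complex.ofReal_ne_zero.mpr (hne η (huIcc ▸ hη)))
    show f a η = (Complex.I * (3 * (η:ℂ) ^ 2 + (a:ℂ)))⁻¹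
      * (Complex.I * (3 * (η:ℂ) ^ 2 + (a:ℂ)) * f a η)
    rw [inv_mul_cancel_left₀ hz]
  rw [Hc, H]

lemma ftc (a c d : ℝ) (hcd : c ≤ d) (hne : ∀ η ∈ Icc c d, 3 * η ^ 2 + a ≠ 0) :
    ∫ η in c..d, 6 * η / (3 * η ^ 2 + a) ^ 2
      = (3 * c ^ 2 + a)⁻¹ - (3 * d ^ 2 + a)⁻¹ := by
  have huIcc : uIcc c d = Icc c d := uIcc_of_le hcd
  have hder : ∀ η ∈ uIcc c d,
      HasDerivAt (fun η : ℝ => -(3 * η ^ 2 + a)⁻¹) (6 * η / (3 * η ^ 2 + a) ^ 2) η := by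
    intro η hη
    have hp : HasDerivAt (fun η : ℝ => 3 * η ^ 2 + a) (3 * (2 * η)) η := by
      simpa using (((hasDerivAt_id η).pow 2).const_mul (3:ℝ)).add_const a
    have := (hp.inv (hne η (huIcc ▸ hη))).neg
    refine this.congr_deriv ?_
    ring
  have hint : IntervalIntegrable (fun η : ℝ => 6 * η / (3 * η ^ 2 + a) ^ 2) volume c d := by
    apply ContinuousOn.intervalIntegrable
    apply ContinuousOn.div
    · fun_prop
    · fun_prop
    · intro x hx
      exact pow_ne_zero 2 (hne x (huIcc ▸ hx))
  rw [intervalIntegral.integral_eq_sub_of_hasDerivAt hder hint]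
  ring

lemma key (a c d lam : ℝ) (h0 : 0 ≤ c) (hcd : c ≤ d) (hlam : 0 < lam)
    (hp : ∀ η ∈ Icc c d, lam ≤ |3 * η ^ 2 + a|) :
    ‖∫ η in c..d, f a η‖ ≤ 4 / lam := by
  have hne : ∀ η ∈ Icc c d, 3 * η ^ 2 + a ≠ 0 := fun η hη =>
    abs_pos.mp (lt_of_lt_of_le hlam (hp η hη))
  have hcmem : c ∈ Icc c d := left_mem_Icc.mpr hcd
  have hdmem : d ∈ Icc c d := right_mem_Icc.mpr hcd
  have hub : ∀ η ∈ Icc c d, ‖u a η * f a η‖ ≤ lam⁻¹ := by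
    intro η hη
    rw [norm_mul, norm_f, mul_one, norm_u]
    exact inv_anti₀ hlam (hp η hη)
  have hIbound : ‖∫ η in c..d, u' a η * f a η‖ ≤ lam⁻¹ + lam⁻¹ := by
    calc ‖∫ η in c..d, u' a η * f a η‖
        ≤ ∫ η in c..d, ‖u' a η * f a η‖ :=
          intervalIntegral.norm_integral_le_integral_norm hcd
      _ = ∫ η in c..d, 6 * η / (3 * η ^ 2 + a) ^ 2 := by
          apply intervalIntegral.integral_congr
          intro η hη
          rw [uIcc_of_le hcd] at hη
          show ‖u' a η * f a η‖ = 6 * η / (3 * η ^ 2 + a) ^ 2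
          rw [norm_mul, norm_f, mul_one, norm_u', _root_.abs_of_nonneg]
          linarith [hη.1, h0]
      _ = (3 * c ^ 2 + a)⁻¹ - (3 * d ^ 2 + a)⁻¹ := ftc a c d hcd hne
      _ ≤ lam⁻¹ + lam⁻¹ := by
          have e1 : |(3 * c ^ 2 + a)⁻¹| ≤ lam⁻¹ := by
            rw [abs_inv]; exact inv_anti₀ hlam (hp c hcmem)
          have e2 : |(3 * d ^ 2 + a)⁻¹| ≤ lam⁻¹ := by
            rw [abs_inv]; exact inv_anti₀ hlam (hp d hdmem)
          have := le_abs_self (3 * c ^ 2 + a)⁻¹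
          have := neg_abs_le (3 * d ^ 2 + a)⁻¹
          linarith
  rw [ibp a c d hcd hne]
  have h1 := hub c hcmem
  have h2 := hub d hdmem
  calc ‖u a d * f a d - u a c * f a c - ∫ η in c..d, u' a η * f a η‖
      ≤ ‖u a d * f a d - u a c * f a c‖ + ‖∫ η in c..d, u' a η * f a η‖ := norm_sub_le _ _
    _ ≤ (‖u a d * f a d‖ + ‖u a c * f a c‖) + ‖∫ η in c..d, u' a η * f a η‖ := by
        have := norm_sub_le (u a d * f a d) (u a c * f a c)
        linarith
    _ ≤ (lam⁻¹ + lam⁻¹) + (lam⁻¹ + lam⁻¹) := by linarith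
    _ ≤ 4 / lam := by rw [div_eq_mul_inv]; linarith

end AiryAux
namespace AiryAux

open MeasureTheory Complex Filter Set intervalIntegral

lemma tail (a b : ℝ) (hb : 1 ≤ b) (hball : ∀ η, b ≤ η → 2 * η ^ 2 ≤ 3 * η ^ 2 + a) :
    ∃ T : ℂ, Tendsto (fun R => ∫ η in b..R, f a η) atTop (nhds T) := by
  have hpos : ∀ η, b ≤ η → (0:ℝ) < 3 * η ^ 2 + a := by
    intro η hη
    have h1 : (1:ℝ) ≤ η := le_trans hb hη
    have h2 : (0:ℝ) < 2 * η ^ 2 := by nlinarith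
    linarith [hball η hη]
  have hne : ∀ η, b ≤ η → 3 * η ^ 2 + a ≠ 0 := fun η hη => ne_of_gt (hpos η hη)
  have hIoi : IntegrableOn (fun η => u' a η * f a η) (Ioi b) volume := by
    have hmeas : AEStronglyMeasurable (fun η => u' a η * f a η)
        (volume.restrict (Ioi b)) := by
      apply ContinuousOn.aestronglyMeasurable _ measurableSet_Ioi
      exact (u'_contOn a (fun η hη => hne η (le_of_lt hη))).mul (f_cont a).continuousOn
    have hg : IntegrableOn (fun η : ℝ => 3/2 * η ^ (-3 : ℝ)) (Ioi b) volume :=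
      (integrableOn_Ioi_rpow_of_lt (by norm_num) (lt_of_lt_of_le one_pos hb)).const_mul (3/2)
    apply hg.mono' hmeas
    rw [ae_restrict_iff' measurableSet_Ioi]
    refine ae_of_all _ (fun η hη => ?_)
    have hηb : b ≤ η := le_of_lt hη
    have hη1 : 1 ≤ η := le_trans hb hηb
    have hη0 : (0:ℝ) < η := by linarith
    rw [norm_mul, norm_f, mul_one, norm_u', _root_.abs_of_nonneg (by linarith : (0:ℝ) ≤ 6 * η)]
    have hrp : η ^ (-3 : ℝ) = (η ^ 3)⁻¹ := by
      rw [Real.rpow_neg hη0.le]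
      congr 1
      rw [show (3 : ℝ) = ((3 : ℕ) : ℝ) by norm_num, Real.rpow_natCast]
    rw [hrp]
    have h1 : 2 * η ^ 2 ≤ 3 * η ^ 2 + a := hball η hηb
    have h4 : 4 * η ^ 4 ≤ (3 * η ^ 2 + a) ^ 2 := by nlinarith
    have step : 6 * η / (3 * η ^ 2 + a) ^ 2 ≤ 6 * η / (4 * η ^ 4) := by
      gcongr
    calc 6 * η / (3 * η ^ 2 + a) ^ 2 ≤ 6 * η / (4 * η ^ 4) := step
      _ = 3/2 * (η ^ 3)⁻¹ := by field_simp; ring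
  have hlim1 : Tendsto (fun R => ∫ η in b..R, u' a η * f a η) atTop
      (nhds (∫ η in Ioi b, u' a η * f a η)) :=
    intervalIntegral_tendsto_integral_Ioi b hIoi tendsto_id
  have hlim2 : Tendsto (fun R => u a R * f a R) atTop (nhds 0) := by
    have hgt : Tendsto (fun R : ℝ => (2 * R ^ 2)⁻¹) atTop (nhds 0) := by
      apply Tendsto.inv_tendsto_atTop
      exact (tendsto_pow_atTop (by norm_num : 2 ≠ 0)).const_mul_atTop (by norm_num)
    apply squeeze_zero_norm' _ hgt
    · filter_upwards [eventually_ge_atTop b] with R hR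
      rw [norm_mul, norm_f, mul_one, norm_u]
      have h1 : 2 * R ^ 2 ≤ 3 * R ^ 2 + a := hball R hR
      have hR1 : 1 ≤ R := le_trans hb hR
      have h2 : (0:ℝ) < 2 * R ^ 2 := by nlinarith
      rw [_root_.abs_of_pos (hpos R hR)]
      exact inv_anti₀ h2 h1
  refine ⟨-(u a b * f a b) - ∫ η in Ioi b, u' a η * f a η, ?_⟩
  have hcand : Tendsto (fun R => u a R * f a R - u a b * f a b - ∫ η in b..R, u' a η * f a η)
      atTop (nhds (-(u a b * f a b) - ∫ η in Ioi b, u' a η * f a η)) := by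
    have := (hlim2.sub (tendsto_const_nhds (x := u a b * f a b))).sub hlim1
    simpa using this
  apply Tendsto.congr' _ hcand
  filter_upwards [eventually_ge_atTop b] with R hR
  exact (ibp a b R hR (fun η hη => hne η hη.1)).symm

lemma interval_conj (g : ℝ → ℂ) (c d : ℝ) :
    ∫ x in c..d, (starRingEnd ℂ) (g x) = (starRingEnd ℂ) (∫ x in c..d, g x) := by
  rw [intervalIntegral.intervalIntegral_eq_integral_uIoc,
    intervalIntegral.intervalIntegral_eq_integral_uIoc, integral_conj]
  split_ifs <;> simp

lemma f_neg (a η : ℝ) : f a (-η) = (starRingEnd ℂ) (f a η) := by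
  unfold f
  rw [← Complex.exp_conj]
  congr 1
  simp only [map_mul, map_add, map_pow, Complex.conj_I, Complex.conj_ofReal]
  push_cast
  ring

end AiryAux
open MeasureTheory Complex Filter

open AiryAux in
theorem airy_integral_uniformly_bounded :
    ∃ C : ℝ, 0 < C ∧ ∀ a : ℝ, ∃ L : ℂ,
      Tendsto (fun R : ℝ => ∫ η in (-R)..R, Complex.exp (Complex.I * ((a : ℂ) * η + (η : ℂ) ^ 3)))
        atTop (nhds L) ∧ ‖L‖ ≤ C := by
  refine ⟨10, by norm_num, fun a => ?_⟩
  set s := Real.sqrt (max 1 (-a/3)) with hs_def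
  have hs0 : (0:ℝ) ≤ max 1 (-a/3) := le_trans zero_le_one (le_max_left _ _)
  have hs1 : 1 ≤ s := by
    have h := Real.sqrt_le_sqrt (le_max_left 1 (-a/3))
    rwa [Real.sqrt_one] at h
  have hss : s ^ 2 = max 1 (-a/3) := Real.sq_sqrt hs0
  have haa : -a/3 ≤ s ^ 2 := hss ▸ le_max_right _ _
  have haa' : -a ≤ 3 * s ^ 2 := by linarith
  have hball : ∀ η, 2*s ≤ η → 2 * η ^ 2 ≤ 3 * η ^ 2 + a := by
    intro η hη
    nlinarith [sq_nonneg (η - 2*s), sq_nonneg s]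
  obtain ⟨T, hT⟩ := tail a (2*s) (by linarith) hball
  have hsplit : ∀ R : ℝ, (∫ η in (0:ℝ)..R, f a η)
      = (∫ η in (0:ℝ)..(2*s), f a η) + ∫ η in (2*s)..R, f a η := fun R =>
    (intervalIntegral.integral_add_adjacent_intervals
      (f_intble a 0 (2*s)) (f_intble a (2*s) R)).symm
  set Lp : ℂ := (∫ η in (0:ℝ)..(2*s), f a η) + T with hLp
  have hIp : Tendsto (fun R => ∫ η in (0:ℝ)..R, f a η) atTop (nhds Lp) := by
    rw [hLp]
    exact Tendsto.congr (fun R => (hsplit R).symm) (tendsto_const_nhds.add hT)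
  have hbd : ∀ R, s + 1 ≤ R → ‖∫ η in (0:ℝ)..R, f a η‖ ≤ 5 := by
    intro R hR
    have h01 : (0:ℝ) ≤ s - 1 := by linarith
    have split2 : (∫ η in (0:ℝ)..R, f a η) = (∫ η in (0:ℝ)..(s-1), f a η)
        + ((∫ η in (s-1)..(s+1), f a η) + ∫ η in (s+1)..R, f a η) := by
      rw [intervalIntegral.integral_add_adjacent_intervals
            (f_intble a (s-1) (s+1)) (f_intble a (s+1) R),
          intervalIntegral.integral_add_adjacent_intervals
            (f_intble a 0 (s-1)) (f_intble a (s-1) R)]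
    have p1 : ‖∫ η in (0:ℝ)..(s-1), f a η‖ ≤ 4/3 := by
      by_cases hA : a ≤ -3
      · have hs2 : s ^ 2 = -a/3 := by rw [hss]; exact max_eq_right (by linarith)
        have ha_eq : a = -3 * s ^ 2 := by linarith
        have hkey := key a 0 (s-1) 3 le_rfl h01 (by norm_num) ?_
        · linarith [hkey]
        · intro η hη
          obtain ⟨hη0, hη1⟩ := hη
          have h1 : 3 * η ^ 2 + a ≤ -3 := by nlinarith
          rw [abs_of_nonpos (by linarith)]
          linarith
      · have hm : max 1 (-a/3) = 1 := max_eq_left (by linarith)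
        have hs' : s = 1 := by rw [hs_def, hm, Real.sqrt_one]
        rw [hs', sub_self, intervalIntegral.integral_same]
        norm_num
    have p2 : ‖∫ η in (s-1)..(s+1), f a η‖ ≤ 2 := by
      have h := intervalIntegral.norm_integral_le_of_norm_le_const
        (C := 1) (f := f a) (a := s-1) (b := s+1) (fun x _ => le_of_eq (norm_f a x))
      have : |s + 1 - (s - 1)| = 2 := by rw [show s + 1 - (s-1) = 2 by ring]; norm_num
      rw [this] at h
      linarith
    have p3 : ‖∫ η in (s+1)..R, f a η‖ ≤ 4/3 := by
      have hkey := key a (s+1) R 3 (by linarith) hR (by norm_num) ?_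
      · linarith [hkey]
      · intro η hη
        have h1 : 3 ≤ 3 * η ^ 2 + a := by nlinarith [hη.1]
        exact le_trans h1 (le_abs_self _)
    rw [split2]
    calc ‖(∫ η in (0:ℝ)..(s-1), f a η)
          + ((∫ η in (s-1)..(s+1), f a η) + ∫ η in (s+1)..R, f a η)‖
        ≤ ‖∫ η in (0:ℝ)..(s-1), f a η‖
          + ‖(∫ η in (s-1)..(s+1), f a η) + ∫ η in (s+1)..R, f a η‖ := norm_add_le _ _
      _ ≤ ‖∫ η in (0:ℝ)..(s-1), f a η‖
          + (‖∫ η in (s-1)..(s+1), f a η‖ + ‖∫ η in (s+1)..R, f a η‖) := by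
          linarith [norm_add_le (∫ η in (s-1)..(s+1), f a η) (∫ η in (s+1)..R, f a η)]
      _ ≤ 5 := by linarith
  have hLpbd : ‖Lp‖ ≤ 5 := by
    apply le_of_tendsto hIp.norm
    filter_upwards [eventually_ge_atTop (s+1)] with R hR using hbd R hR
  refine ⟨(starRingEnd ℂ) Lp + Lp, ?_, ?_⟩
  · have hneg : ∀ R : ℝ, (∫ η in (-R)..(0:ℝ), f a η)
        = (starRingEnd ℂ) (∫ η in (0:ℝ)..R, f a η) := by
      intro R
      calc (∫ η in (-R)..(0:ℝ), f a η) = ∫ η in (-R)..(-(0:ℝ)), f a η := by rw [neg_zero]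
        _ = ∫ η in (0:ℝ)..R, f a (-η) := (intervalIntegral.integral_comp_neg (f a)).symm
        _ = ∫ η in (0:ℝ)..R, (starRingEnd ℂ) (f a η) := by
            apply intervalIntegral.integral_congr
            intro x _
            exact f_neg a x
        _ = (starRingEnd ℂ) (∫ η in (0:ℝ)..R, f a η) := interval_conj (f a) 0 R
    have hFsplit : ∀ R : ℝ, (∫ η in (-R)..R, f a η)
        = (starRingEnd ℂ) (∫ η in (0:ℝ)..R, f a η) + ∫ η in (0:ℝ)..R, f a η := by
      intro R
      rw [← intervalIntegral.integral_add_adjacent_intervals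
        (f_intble a (-R) 0) (f_intble a 0 R), hneg R]
    have hconj : Tendsto (fun R => (starRingEnd ℂ) (∫ η in (0:ℝ)..R, f a η)) atTop
        (nhds ((starRingEnd ℂ) Lp)) := by
      exact ((continuous_conj.tendsto Lp).comp hIp : _)
    have hfin := hconj.add hIp
    exact hfin.congr (fun R => (hFsplit R).symm)
  · calc ‖(starRingEnd ℂ) Lp + Lp‖ ≤ ‖(starRingEnd ℂ) Lp‖ + ‖Lp‖ := norm_add_le _ _
      _ = ‖Lp‖ + ‖Lp‖ := by rw [RCLike.norm_conj]
      _ ≤ 10 := by linarith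
end

section
/- Van der Corput estimate with second-derivative lower bound and amplitude: let Φ : [a,b] → ℝ be C² with |Φ''(ξ)| ≥ λ > 0 for all ξ ∈ [a,b], and let ψ : [a,b] → ℂ be C¹. Then |∫_a^b ψ(ξ) e^{iΦ(ξ)} dξ| ≤ C·λ^{−1/2}·(‖ψ‖_∞ + ∫_a^b |ψ'(ξ)| dξ) for an absolute constant C. -/
open MeasureTheory Complex Set intervalIntegral

namespace VdC

lemma le_on_Icc_of_le_on_Ioo {a b c : ℝ} (hab : a < b) {f : ℝ → ℝ}
    (hf : ContinuousOn f (Icc a b)) (h : ∀ x ∈ Ioo a b, c ≤ f x) :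
    ∀ x ∈ Icc a b, c ≤ f x := by
  intro x hx
  have hcl : x ∈ closure (Ioo a b) := by
    rw [closure_Ioo hab.ne]; exact hx
  have hne : (nhdsWithin x (Ioo a b)).NeBot := mem_closure_iff_nhdsWithin_neBot.1 hcl
  have ht : Filter.Tendsto f (nhdsWithin x (Ioo a b)) (nhds (f x)) :=
    (hf x hx).mono Ioo_subset_Icc_self
  exact ge_of_tendsto ht (Filter.eventually_of_mem self_mem_nhdsWithin fun y hy => h y hy)

lemma lemA {a b μ : ℝ} (hab : a ≤ b) (hμ : 0 < μ) {Φ Φ' Φ'' : ℝ → ℝ}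
    (hΦc : ContinuousOn Φ (Icc a b)) (hΦ'c : ContinuousOn Φ' (Icc a b))
    (hΦ''c : ContinuousOn Φ'' (Icc a b))
    (hd1 : ∀ ξ ∈ Ioo a b, HasDerivAt Φ (Φ' ξ) ξ)
    (hd2 : ∀ ξ ∈ Ioo a b, HasDerivAt Φ' (Φ'' ξ) ξ)
    (hlow : ∀ ξ ∈ Icc a b, μ ≤ |Φ' ξ|)
    (hsgn : ∀ ξ ∈ Icc a b, 0 ≤ Φ'' ξ) :
    ‖∫ ξ in a..b, Complex.exp (Complex.I * (Φ ξ : ℂ))‖ ≤ 4 / μ := by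
  have hne : ∀ ξ ∈ Icc a b, Φ' ξ ≠ 0 := by
    intro ξ hξ h0
    have := hlow ξ hξ
    rw [h0, abs_zero] at this
    linarith
  set F : ℝ → ℂ := fun ξ => Complex.exp (Complex.I * (Φ ξ : ℂ)) with hF
  have hFnorm : ∀ ξ, ‖F ξ‖ = 1 := by
    intro ξ
    simp [hF, Complex.norm_exp]
  have hΦcC : ContinuousOn (fun ξ => Complex.I * (Φ ξ : ℂ)) (Icc a b) :=
    continuousOn_const.mul (Complex.continuous_ofReal.comp_continuousOn hΦc)
  have hFc : ContinuousOn F (Icc a b) := Complex.continuous_exp.comp_continuousOn hΦcC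
  have hIne : ∀ ξ ∈ Icc a b, (Complex.I * (Φ' ξ : ℂ)) ≠ 0 := by
    intro ξ hξ
    exact mul_ne_zero Complex.I_ne_zero (by exact_mod_cast hne ξ hξ)
  set G : ℝ → ℂ := fun ξ => F ξ / (Complex.I * (Φ' ξ : ℂ)) with hG
  have hΦ'cC : ContinuousOn (fun ξ => Complex.I * (Φ' ξ : ℂ)) (Icc a b) :=
    continuousOn_const.mul (Complex.continuous_ofReal.comp_continuousOn hΦ'c)
  have hGc : ContinuousOn G (Icc a b) := hFc.div hΦ'cC hIne
  set q : ℝ → ℝ := fun ξ => Φ'' ξ / (Φ' ξ) ^ 2 with hq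
  have hqc : ContinuousOn q (Icc a b) :=
    hΦ''c.div (hΦ'c.pow 2) fun ξ hξ => pow_ne_zero 2 (hne ξ hξ)
  have hqnn : ∀ ξ ∈ Icc a b, 0 ≤ q ξ := fun ξ hξ =>
    div_nonneg (hsgn ξ hξ) (sq_nonneg _)
  have hGd : ∀ ξ ∈ Ioo a b,
      HasDerivAt G (F ξ + F ξ * (Complex.I * ((q ξ : ℝ) : ℂ))) ξ := by
    intro ξ hξ
    have hξI : ξ ∈ Icc a b := Ioo_subset_Icc_self hξ
    have h1 : HasDerivAt (fun y => Complex.I * (Φ y : ℂ)) (Complex.I * (Φ' ξ : ℂ)) ξ :=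
      ((hd1 ξ hξ).ofReal_comp).const_mul Complex.I
    have hFd : HasDerivAt F (Complex.exp (Complex.I * (Φ ξ : ℂ)) * (Complex.I * (Φ' ξ : ℂ))) ξ :=
      h1.cexp
    have h2 : HasDerivAt (fun y => Complex.I * (Φ' y : ℂ)) (Complex.I * (Φ'' ξ : ℂ)) ξ :=
      ((hd2 ξ hξ).ofReal_comp).const_mul Complex.I
    have := hFd.div h2 (hIne ξ hξI)
    refine this.congr_deriv (Eq.symm ?_)
    have hne' : (Φ' ξ : ℂ) ≠ 0 := by exact_mod_cast hne ξ hξI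
    have hI2 : (Complex.I : ℂ) ^ 2 = -1 := Complex.I_sq
    field_simp [hq]
    ring_nf
    rw [hI2]; simp only [hq, hF]; push_cast; field_simp
    ring
  set G' : ℝ → ℂ := fun ξ => F ξ + F ξ * (Complex.I * ((q ξ : ℝ) : ℂ)) with hG'
  have hqcC : ContinuousOn (fun ξ => ((q ξ : ℝ) : ℂ)) (Icc a b) :=
    Complex.continuous_ofReal.comp_continuousOn hqc
  have hG'c : ContinuousOn G' (Icc a b) :=
    hFc.add (hFc.mul (continuousOn_const.mul hqcC))
  have hG'int : IntervalIntegrable G' volume a b := by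
    apply ContinuousOn.intervalIntegrable
    rwa [uIcc_of_le hab]
  have ftcG : (∫ ξ in a..b, G' ξ) = G b - G a :=
    integral_eq_sub_of_hasDeriv_right_of_le hab hGc
      (fun ξ hξ => (hGd ξ hξ).hasDerivWithinAt) hG'int
  have hFint : IntervalIntegrable F volume a b := by
    apply ContinuousOn.intervalIntegrable
    rwa [uIcc_of_le hab]
  have hqint : IntervalIntegrable (fun ξ => F ξ * (Complex.I * ((q ξ : ℝ) : ℂ))) volume a b := by
    apply ContinuousOn.intervalIntegrable
    rw [uIcc_of_le hab]
    exact hFc.mul (continuousOn_const.mul hqcC)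
  have hsplit : (∫ ξ in a..b, F ξ) =
      G b - G a - ∫ ξ in a..b, F ξ * (Complex.I * ((q ξ : ℝ) : ℂ)) := by
    rw [← ftcG, hG', intervalIntegral.integral_add hFint hqint]
    ring
  -- FTC for q
  have hginv : ∀ ξ ∈ Ioo a b, HasDerivAt (fun y => -(Φ' y)⁻¹) (q ξ) ξ := by
    intro ξ hξ
    have := ((hd2 ξ hξ).inv (hne ξ (Ioo_subset_Icc_self hξ))).neg
    refine this.congr_deriv (Eq.symm ?_)
    simp [hq]
    ring
  have hqint' : IntervalIntegrable q volume a b := by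
    apply ContinuousOn.intervalIntegrable
    rwa [uIcc_of_le hab]
  have ftcq : (∫ ξ in a..b, q ξ) = -(Φ' b)⁻¹ - -(Φ' a)⁻¹ :=
    integral_eq_sub_of_hasDeriv_right_of_le hab ((hΦ'c.inv₀ hne).neg)
      (fun ξ hξ => (hginv ξ hξ).hasDerivWithinAt) hqint'
  have hinv : ∀ ξ ∈ Icc a b, |(Φ' ξ)⁻¹| ≤ 1 / μ := by
    intro ξ hξ
    rw [abs_inv, one_div]
    exact inv_anti₀ hμ (hlow ξ hξ)
  have hGnorm : ∀ ξ ∈ Icc a b, ‖G ξ‖ ≤ 1 / μ := by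
    intro ξ hξ
    have : ‖G ξ‖ = |Φ' ξ|⁻¹ := by
      rw [hG]
      simp only [norm_div, hFnorm, norm_mul, Complex.norm_I,
        Complex.norm_real, Real.norm_eq_abs, one_mul, one_div]
    rw [this, ← abs_inv]
    exact hinv ξ hξ
  have hIq : ‖∫ ξ in a..b, F ξ * (Complex.I * ((q ξ : ℝ) : ℂ))‖ ≤ 2 / μ := by
    have h1 : ‖∫ ξ in a..b, F ξ * (Complex.I * ((q ξ : ℝ) : ℂ))‖ ≤
        ∫ ξ in a..b, ‖F ξ * (Complex.I * ((q ξ : ℝ) : ℂ))‖ :=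
      intervalIntegral.norm_integral_le_integral_norm hab
    have h2 : (∫ ξ in a..b, ‖F ξ * (Complex.I * ((q ξ : ℝ) : ℂ))‖) = ∫ ξ in a..b, q ξ := by
      apply intervalIntegral.integral_congr
      intro ξ hξ
      rw [uIcc_of_le hab] at hξ
      simp [norm_mul, hFnorm, Complex.norm_real, Real.norm_eq_abs, Complex.norm_I,
        _root_.abs_of_nonneg (hqnn ξ hξ)]
    have h3 : (∫ ξ in a..b, q ξ) ≤ 2 / μ := by
      rw [ftcq]
      have ha' := hinv a (left_mem_Icc.2 hab)
      have hb' := hinv b (right_mem_Icc.2 hab)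
      have := abs_sub (-(Φ' b)⁻¹) (-(Φ' a)⁻¹)
      calc -(Φ' b)⁻¹ - -(Φ' a)⁻¹ ≤ |(-(Φ' b)⁻¹) - (-(Φ' a)⁻¹)| := le_abs_self _
        _ ≤ |(Φ' b)⁻¹| + |(Φ' a)⁻¹| := by
            rw [abs_sub_comm]
            calc |(-(Φ' a)⁻¹) - (-(Φ' b)⁻¹)| ≤ |(-(Φ' a)⁻¹)| + |(-(Φ' b)⁻¹)| := abs_sub _ _
              _ = |(Φ' a)⁻¹| + |(Φ' b)⁻¹| := by rw [abs_neg, abs_neg]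
              _ = |(Φ' b)⁻¹| + |(Φ' a)⁻¹| := by ring
        _ ≤ 1 / μ + 1 / μ := add_le_add hb' ha'
        _ = 2 / μ := by ring
    linarith
  rw [hsplit]
  have hGa := hGnorm a (left_mem_Icc.2 hab)
  have hGb := hGnorm b (right_mem_Icc.2 hab)
  calc ‖G b - G a - ∫ ξ in a..b, F ξ * (Complex.I * ((q ξ : ℝ) : ℂ))‖
      ≤ ‖G b - G a‖ + ‖∫ ξ in a..b, F ξ * (Complex.I * ((q ξ : ℝ) : ℂ))‖ := norm_sub_le _ _
    _ ≤ (‖G b‖ + ‖G a‖) + ‖∫ ξ in a..b, F ξ * (Complex.I * ((q ξ : ℝ) : ℂ))‖ := by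
        have := norm_sub_le (G b) (G a); linarith
    _ ≤ (1 / μ + 1 / μ) + 2 / μ := by
        have := hIq; linarith
    _ = 4 / μ := by ring

lemma lemB {a b lam : ℝ} (hab : a ≤ b) (hlam : 0 < lam) {Φ Φ' Φ'' : ℝ → ℝ}
    (hΦc : ContinuousOn Φ (Icc a b)) (hΦ'c : ContinuousOn Φ' (Icc a b))
    (hΦ''c : ContinuousOn Φ'' (Icc a b))
    (hd1 : ∀ ξ ∈ Ioo a b, HasDerivAt Φ (Φ' ξ) ξ)
    (hd2 : ∀ ξ ∈ Ioo a b, HasDerivAt Φ' (Φ'' ξ) ξ)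
    (hlow : ∀ ξ ∈ Icc a b, lam ≤ Φ'' ξ) :
    ‖∫ ξ in a..b, Complex.exp (Complex.I * (Φ ξ : ℂ))‖ ≤ 12 * lam ^ (-(1 : ℝ) / 2) := by
  set μ := Real.sqrt lam with hμdef
  have hμ : 0 < μ := Real.sqrt_pos.2 hlam
  have hμsq : μ ^ 2 = lam := Real.sq_sqrt hlam.le
  have hrpow : lam ^ (-(1 : ℝ) / 2) = μ⁻¹ := by
    rw [show (-(1 : ℝ) / 2) = -(1 / 2) by ring, Real.rpow_neg hlam.le, hμdef,
      Real.sqrt_eq_rpow]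
  have hIooSub : ∀ x ∈ Icc a b, ∀ y ∈ Icc a b, Ioo x y ⊆ Ioo a b := by
    intro x hx y hy z hz
    exact ⟨lt_of_le_of_lt hx.1 hz.1, lt_of_lt_of_le hz.2 hy.2⟩
  have grow : ∀ x ∈ Icc a b, ∀ y ∈ Icc a b, x ≤ y → lam * (y - x) ≤ Φ' y - Φ' x := by
    intro x hx y hy hxy
    have hIccSub : Icc x y ⊆ Icc a b := Icc_subset_Icc hx.1 hy.2
    have hint : IntervalIntegrable Φ'' volume x y := by
      apply ContinuousOn.intervalIntegrable
      rw [uIcc_of_le hxy]; exact hΦ''c.mono hIccSub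
    have ftc : (∫ ξ in x..y, Φ'' ξ) = Φ' y - Φ' x :=
      integral_eq_sub_of_hasDeriv_right_of_le hxy (hΦ'c.mono hIccSub)
        (fun ξ hξ => (hd2 ξ (hIooSub x hx y hy hξ)).hasDerivWithinAt) hint
    have hmono : (∫ _ξ in x..y, lam) ≤ ∫ ξ in x..y, Φ'' ξ :=
      intervalIntegral.integral_mono_on hxy intervalIntegrable_const hint
        (fun ξ hξ => hlow ξ (hIccSub hξ))
    rw [intervalIntegral.integral_const, smul_eq_mul] at hmono
    rw [← ftc]; nlinarith [hmono]
  have mono : ∀ x ∈ Icc a b, ∀ y ∈ Icc a b, x ≤ y → Φ' x ≤ Φ' y := by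
    intro x hx y hy hxy
    have := grow x hx y hy hxy
    nlinarith
  set S₁ : Set ℝ := {ξ | ξ ∈ Icc a b ∧ Φ' ξ ≤ -μ} with hS₁def
  set S₂ : Set ℝ := {ξ | ξ ∈ Icc a b ∧ μ ≤ Φ' ξ} with hS₂def
  have hS₁closed : IsClosed S₁ := by
    have : S₁ = Icc a b ∩ Φ' ⁻¹' (Iic (-μ)) := rfl
    rw [this]
    exact hΦ'c.preimage_isClosed_of_isClosed isClosed_Icc isClosed_Iic
  have hS₂closed : IsClosed S₂ := by
    have : S₂ = Icc a b ∩ Φ' ⁻¹' (Ici μ) := rfl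
    rw [this]
    exact hΦ'c.preimage_isClosed_of_isClosed isClosed_Icc isClosed_Ici
  set c := sSup (insert a S₁) with hcdef
  set d := sInf (insert b S₂) with hddef
  have hbdd1 : BddAbove (insert a S₁) := by
    refine ⟨b, ?_⟩
    rintro x (rfl | hx)
    · exact hab
    · exact hx.1.2
  have hbdd2 : BddBelow (insert b S₂) := by
    refine ⟨a, ?_⟩
    rintro x (rfl | hx)
    · exact hab
    · exact hx.1.1
  have hca : a ≤ c := le_csSup hbdd1 (mem_insert a S₁)
  have hcb : c ≤ b := by
    apply csSup_le (insert_nonempty _ _)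
    rintro x (rfl | hx)
    · exact hab
    · exact hx.1.2
  have hda : a ≤ d := by
    apply le_csInf (insert_nonempty _ _)
    rintro x (rfl | hx)
    · exact hab
    · exact hx.1.1
  have hdb : d ≤ b := csInf_le hbdd2 (mem_insert b S₂)
  have hcd : c ≤ d := by
    apply csSup_le (insert_nonempty _ _)
    rintro x (rfl | hx)
    · exact hda
    · apply le_csInf (insert_nonempty _ _)
      rintro y (rfl | hy)
      · exact hx.1.2
      · by_contra hcon
        push_neg at hcon
        have := mono y hy.1 x hx.1 hcon.le
        have h1 := hx.2
        have h2 := hy.2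
        linarith
  have hcIcc : c ∈ Icc a b := ⟨hca, hcb⟩
  have hdIcc : d ∈ Icc a b := ⟨hda, hdb⟩
  -- piece 1
  have hpiece1 : ‖∫ ξ in a..c, Complex.exp (Complex.I * (Φ ξ : ℂ))‖ ≤ 4 / μ := by
    rcases eq_or_lt_of_le hca with h | h
    · rw [← h, intervalIntegral.integral_same, norm_zero]
      positivity
    · have hcmem : c ∈ insert a S₁ := by
        apply IsClosed.csSup_mem _ (insert_nonempty _ _) hbdd1
        exact (isClosed_singleton (x := a)).union hS₁closed
      have hcS₁ : c ∈ S₁ := by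
        rcases hcmem with h' | h'
        · exact absurd h'.symm h.ne
        · exact h'
      have hc1 : ∀ ξ ∈ Icc a c, Φ' ξ ≤ -μ := by
        intro ξ hξ
        rcases eq_or_lt_of_le hξ.2 with h' | h'
        · rw [h']; exact hcS₁.2
        · obtain ⟨s, hs, hξs⟩ := exists_lt_of_lt_csSup (insert_nonempty _ _) h'
          rcases hs with rfl | hs
          · linarith [hξ.1]
          · calc Φ' ξ ≤ Φ' s := mono ξ ⟨hξ.1, hξ.2.trans hcb⟩ s hs.1 hξs.le
              _ ≤ -μ := hs.2
      apply lemA h.le hμ (hΦc.mono (Icc_subset_Icc le_rfl hcb))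
        (hΦ'c.mono (Icc_subset_Icc le_rfl hcb)) (hΦ''c.mono (Icc_subset_Icc le_rfl hcb))
        (fun ξ hξ => hd1 ξ (hIooSub a (left_mem_Icc.2 hab) c hcIcc hξ))
        (fun ξ hξ => hd2 ξ (hIooSub a (left_mem_Icc.2 hab) c hcIcc hξ))
      · intro ξ hξ
        have := hc1 ξ hξ
        rw [le_abs]
        right; linarith
      · intro ξ hξ
        have := hlow ξ (Icc_subset_Icc le_rfl hcb hξ)
        linarith
  -- piece 3
  have hpiece3 : ‖∫ ξ in d..b, Complex.exp (Complex.I * (Φ ξ : ℂ))‖ ≤ 4 / μ := by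
    rcases eq_or_lt_of_le hdb with h | h
    · rw [h, intervalIntegral.integral_same, norm_zero]
      positivity
    · have hdmem : d ∈ insert b S₂ := by
        apply IsClosed.csInf_mem _ (insert_nonempty _ _) hbdd2
        exact (isClosed_singleton (x := b)).union hS₂closed
      have hdS₂ : d ∈ S₂ := by
        rcases hdmem with h' | h'
        · exact absurd h' h.ne
        · exact h'
      have hd1' : ∀ ξ ∈ Icc d b, μ ≤ Φ' ξ := by
        intro ξ hξ
        rcases eq_or_lt_of_le hξ.1 with h' | h'
        · rw [← h']; exact hdS₂.2
        · obtain ⟨s, hs, hξs⟩ := exists_lt_of_csInf_lt (insert_nonempty _ _) h'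
          rcases hs with rfl | hs
          · linarith [hξ.2]
          · calc μ ≤ Φ' s := hs.2
              _ ≤ Φ' ξ := mono s hs.1 ξ ⟨hda.trans hξ.1, hξ.2⟩ hξs.le
      apply lemA h.le hμ (hΦc.mono (Icc_subset_Icc hda le_rfl))
        (hΦ'c.mono (Icc_subset_Icc hda le_rfl)) (hΦ''c.mono (Icc_subset_Icc hda le_rfl))
        (fun ξ hξ => hd1 ξ (hIooSub d hdIcc b (right_mem_Icc.2 hab) hξ))
        (fun ξ hξ => hd2 ξ (hIooSub d hdIcc b (right_mem_Icc.2 hab) hξ))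
      · intro ξ hξ
        have := hd1' ξ hξ
        rw [le_abs]
        left; linarith
      · intro ξ hξ
        have := hlow ξ (Icc_subset_Icc hda le_rfl hξ)
        linarith
  -- middle bound
  have hmid : d - c ≤ 4 * μ / lam := by
    rcases le_or_gt d c with h | h
    · have : (0:ℝ) < 4 * μ / lam := by positivity
      linarith
    · set x' := c + (d - c) / 4 with hx'def
      set y' := d - (d - c) / 4 with hy'def
      have hx'Ioo : x' ∈ Ioo c d := by constructor <;> (rw [hx'def]; nlinarith)
      have hy'Ioo : y' ∈ Ioo c d := by constructor <;> (rw [hy'def]; nlinarith)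
      have hx'Icc : x' ∈ Icc a b := ⟨hca.trans hx'Ioo.1.le, hx'Ioo.2.le.trans hdb⟩
      have hy'Icc : y' ∈ Icc a b := ⟨hca.trans hy'Ioo.1.le, hy'Ioo.2.le.trans hdb⟩
      have hx'gt : -μ < Φ' x' := by
        by_contra hcon
        push_neg at hcon
        have : x' ∈ S₁ := ⟨hx'Icc, hcon⟩
        have := le_csSup hbdd1 (mem_insert_of_mem a this)
        linarith [hx'Ioo.1]
      have hy'lt : Φ' y' < μ := by
        by_contra hcon
        push_neg at hcon
        have : y' ∈ S₂ := ⟨hy'Icc, hcon⟩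
        have := csInf_le hbdd2 (mem_insert_of_mem b this)
        linarith [hy'Ioo.2]
      have hxy' : x' ≤ y' := by rw [hx'def, hy'def]; nlinarith
      have := grow x' hx'Icc y' hy'Icc hxy'
      have hyx : y' - x' = (d - c) / 2 := by rw [hx'def, hy'def]; ring
      rw [hyx] at this
      rw [le_div_iff₀ hlam]
      nlinarith
  -- combine
  set F : ℝ → ℂ := fun ξ => Complex.exp (Complex.I * (Φ ξ : ℂ)) with hFdef
  have hFnorm : ∀ ξ, ‖F ξ‖ = 1 := by
    intro ξ
    simp [hFdef, Complex.norm_exp]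
  have hFc : ContinuousOn F (Icc a b) :=
    Complex.continuous_exp.comp_continuousOn
      (continuousOn_const.mul (Complex.continuous_ofReal.comp_continuousOn hΦc))
  have hFi : ∀ x ∈ Icc a b, ∀ y ∈ Icc a b, x ≤ y → IntervalIntegrable F volume x y := by
    intro x hx y hy hxy
    apply ContinuousOn.intervalIntegrable
    rw [uIcc_of_le hxy]
    exact hFc.mono (Icc_subset_Icc hx.1 hy.2)
  have hsplit : (∫ ξ in a..b, F ξ) =
      (∫ ξ in a..c, F ξ) + (∫ ξ in c..d, F ξ) + ∫ ξ in d..b, F ξ := by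
    rw [intervalIntegral.integral_add_adjacent_intervals
        (hFi a (left_mem_Icc.2 hab) c hcIcc hca) (hFi c hcIcc d hdIcc hcd),
      intervalIntegral.integral_add_adjacent_intervals
        (hFi a (left_mem_Icc.2 hab) d hdIcc hda)
        (hFi d hdIcc b (right_mem_Icc.2 hab) hdb)]
  have hmidnorm : ‖∫ ξ in c..d, F ξ‖ ≤ d - c := by
    have h1 : ‖∫ ξ in c..d, F ξ‖ ≤ 1 * |d - c| :=
      intervalIntegral.norm_integral_le_of_norm_le_const fun x _ => (hFnorm x).le
    rw [one_mul, _root_.abs_of_nonneg (by linarith : (0:ℝ) ≤ d - c)] at h1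
    exact h1
  have h4 : 4 * μ / lam = 4 / μ := by
    rw [← hμsq]
    field_simp
  calc ‖∫ ξ in a..b, F ξ‖
      ≤ ‖(∫ ξ in a..c, F ξ) + (∫ ξ in c..d, F ξ)‖ + ‖∫ ξ in d..b, F ξ‖ := by
        rw [hsplit]; exact norm_add_le _ _
    _ ≤ (‖∫ ξ in a..c, F ξ‖ + ‖∫ ξ in c..d, F ξ‖) + ‖∫ ξ in d..b, F ξ‖ := by
        have := norm_add_le (∫ ξ in a..c, F ξ) (∫ ξ in c..d, F ξ)
        linarith
    _ ≤ (4 / μ + (d - c)) + 4 / μ := by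
        have := hmidnorm
        linarith [hpiece1, hpiece3]
    _ ≤ (4 / μ + 4 / μ) + 4 / μ := by
        rw [← h4]
        linarith [hmid]
    _ = 12 * lam ^ (-(1 : ℝ) / 2) := by
        rw [hrpow]
        field_simp
        ring

lemma lemB' {a b lam : ℝ} (hab : a ≤ b) (hlam : 0 < lam) {Φ Φ' Φ'' : ℝ → ℝ}
    (hΦc : ContinuousOn Φ (Icc a b)) (hΦ'c : ContinuousOn Φ' (Icc a b))
    (hΦ''c : ContinuousOn Φ'' (Icc a b))
    (hd1 : ∀ ξ ∈ Ioo a b, HasDerivAt Φ (Φ' ξ) ξ)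
    (hd2 : ∀ ξ ∈ Ioo a b, HasDerivAt Φ' (Φ'' ξ) ξ)
    (hlow : ∀ ξ ∈ Icc a b, lam ≤ |Φ'' ξ|) :
    ‖∫ ξ in a..b, Complex.exp (Complex.I * (Φ ξ : ℂ))‖ ≤ 12 * lam ^ (-(1 : ℝ) / 2) := by
  have hdich : (∀ ξ ∈ Icc a b, lam ≤ Φ'' ξ) ∨ (∀ ξ ∈ Icc a b, Φ'' ξ ≤ -lam) := by
    by_contra hcon
    push_neg at hcon
    obtain ⟨⟨x, hx, hx'⟩, ⟨y, hy, hy'⟩⟩ := hcon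
    have hxle : Φ'' x ≤ -lam := by
      have := hlow x hx
      rw [le_abs] at this
      rcases this with h | h
      · linarith
      · linarith
    have hyge : lam ≤ Φ'' y := by
      have := hlow y hy
      rw [le_abs] at this
      rcases this with h | h
      · exact h
      · linarith
    have hsub : uIcc x y ⊆ Icc a b := uIcc_subset_Icc hx hy
    have hivt := intermediate_value_uIcc (hΦ''c.mono hsub)
    have h0 : (0 : ℝ) ∈ uIcc (Φ'' x) (Φ'' y) := by
      rw [Set.mem_uIcc]
      left
      constructor <;> linarith
    obtain ⟨z, hz, hz0⟩ := hivt h0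
    have := hlow z (hsub hz)
    rw [hz0, abs_zero] at this
    linarith
  rcases hdich with h | h
  · exact lemB hab hlam hΦc hΦ'c hΦ''c hd1 hd2 h
  · have key := lemB (Φ := fun ξ => -Φ ξ) (Φ' := fun ξ => -Φ' ξ) (Φ'' := fun ξ => -Φ'' ξ)
      hab hlam hΦc.neg hΦ'c.neg hΦ''c.neg
      (fun ξ hξ => (hd1 ξ hξ).neg) (fun ξ hξ => (hd2 ξ hξ).neg)
      (fun ξ hξ => by have := h ξ hξ; simp only [le_neg]; linarith)
    have hconj : (∫ ξ in a..b, Complex.exp (Complex.I * ((-Φ ξ : ℝ) : ℂ))) =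
        (starRingEnd ℂ) (∫ ξ in a..b, Complex.exp (Complex.I * (Φ ξ : ℂ))) := by
      rw [intervalIntegral.integral_of_le hab, intervalIntegral.integral_of_le hab,
        ← integral_conj]
      apply MeasureTheory.integral_congr_ae
      filter_upwards with ξ
      rw [← Complex.exp_conj]
      congr 1
      simp only [map_mul, Complex.conj_I, Complex.conj_ofReal]
      push_cast
      ring
    rw [hconj, RCLike.norm_conj] at key
    exact key

lemma lemC {a b lam M : ℝ} (hab : a ≤ b) (hlam : 0 < lam) {Φ Φ' Φ'' : ℝ → ℝ} {ψ ψ' : ℝ → ℂ}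
    (hΦc : ContinuousOn Φ (Icc a b)) (hΦ'c : ContinuousOn Φ' (Icc a b))
    (hΦ''c : ContinuousOn Φ'' (Icc a b))
    (hd1 : ∀ ξ ∈ Ioo a b, HasDerivAt Φ (Φ' ξ) ξ)
    (hd2 : ∀ ξ ∈ Ioo a b, HasDerivAt Φ' (Φ'' ξ) ξ)
    (hlow : ∀ ξ ∈ Icc a b, lam ≤ |Φ'' ξ|)
    (hψc : ContinuousOn ψ (Icc a b)) (hψ'c : ContinuousOn ψ' (Icc a b))
    (hdψ : ∀ ξ ∈ Ioo a b, HasDerivAt ψ (ψ' ξ) ξ)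
    (hM : ∀ ξ ∈ Icc a b, ‖ψ ξ‖ ≤ M) :
    ‖∫ ξ in a..b, ψ ξ * Complex.exp (Complex.I * (Φ ξ : ℂ))‖ ≤
      12 * lam ^ (-(1 : ℝ) / 2) * (M + ∫ ξ in a..b, ‖ψ' ξ‖) := by
  set B := 12 * lam ^ (-(1 : ℝ) / 2) with hBdef
  have hB0 : 0 ≤ B := by positivity
  set F : ℝ → ℂ := fun ξ => Complex.exp (Complex.I * (Φ ξ : ℂ)) with hFdef
  have hFc : ContinuousOn F (Icc a b) :=
    Complex.continuous_exp.comp_continuousOn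
      (continuousOn_const.mul (Complex.continuous_ofReal.comp_continuousOn hΦc))
  have hFIcc : IntegrableOn F (Icc a b) volume := hFc.integrableOn_Icc
  set v : ℝ → ℂ := fun t => ∫ ξ in a..t, F ξ with hvdef
  have hvB : ∀ t ∈ Icc a b, ‖v t‖ ≤ B := by
    intro t ht
    have hsubI : Icc a t ⊆ Icc a b := Icc_subset_Icc le_rfl ht.2
    have hsubO : Ioo a t ⊆ Ioo a b := Ioo_subset_Ioo le_rfl ht.2
    exact lemB' ht.1 hlam (hΦc.mono hsubI) (hΦ'c.mono hsubI) (hΦ''c.mono hsubI)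
      (fun ξ hξ => hd1 ξ (hsubO hξ)) (fun ξ hξ => hd2 ξ (hsubO hξ))
      (fun ξ hξ => hlow ξ (hsubI hξ))
  have hvc : ContinuousOn v (Icc a b) := by
    have := intervalIntegral.continuousOn_primitive_interval
      (a := a) (b := b) (f := F) (μ := volume) (by rwa [uIcc_of_le hab])
    rwa [uIcc_of_le hab] at this
  have hvd : ∀ ξ ∈ Ioo a b, HasDerivAt v (F ξ) ξ := by
    intro ξ hξ
    have hint : IntervalIntegrable F volume a ξ := by
      apply ContinuousOn.intervalIntegrable
      rw [uIcc_of_le hξ.1.le]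
      exact hFc.mono (Icc_subset_Icc le_rfl hξ.2.le)
    have hmeas : StronglyMeasurableAtFilter F (nhds ξ) volume :=
      ContinuousOn.stronglyMeasurableAtFilter isOpen_Ioo (hFc.mono Ioo_subset_Icc_self) ξ hξ
    have hcont : ContinuousAt F ξ :=
      ((hFc.mono Ioo_subset_Icc_self) ξ hξ).continuousAt (isOpen_Ioo.mem_nhds hξ)
    exact intervalIntegral.integral_hasDerivAt_right hint hmeas hcont
  set H : ℝ → ℂ := fun ξ => ψ ξ * v ξ with hHdef
  have hHc : ContinuousOn H (Icc a b) := hψc.mul hvc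
  have hHd : ∀ ξ ∈ Ioo a b, HasDerivAt H (ψ' ξ * v ξ + ψ ξ * F ξ) ξ :=
    fun ξ hξ => (hdψ ξ hξ).mul (hvd ξ hξ)
  have hint1 : IntervalIntegrable (fun ξ => ψ' ξ * v ξ) volume a b := by
    apply ContinuousOn.intervalIntegrable
    rw [uIcc_of_le hab]
    exact hψ'c.mul hvc
  have hint2 : IntervalIntegrable (fun ξ => ψ ξ * F ξ) volume a b := by
    apply ContinuousOn.intervalIntegrable
    rw [uIcc_of_le hab]
    exact hψc.mul hFc
  have ftc : (∫ ξ in a..b, (ψ' ξ * v ξ + ψ ξ * F ξ)) = H b - H a :=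
    integral_eq_sub_of_hasDeriv_right_of_le hab hHc
      (fun ξ hξ => (hHd ξ hξ).hasDerivWithinAt) (hint1.add hint2)
  have hHa : H a = 0 := by
    simp [hHdef, hvdef, intervalIntegral.integral_same]
  rw [intervalIntegral.integral_add hint1 hint2, hHa, sub_zero] at ftc
  have hsplit : (∫ ξ in a..b, ψ ξ * F ξ) = ψ b * v b - ∫ ξ in a..b, ψ' ξ * v ξ := by
    have hHb : H b = ψ b * v b := rfl
    rw [← hHb]
    linear_combination ftc
  have hnint : IntervalIntegrable (fun ξ => ‖ψ' ξ * v ξ‖) volume a b := by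
    apply ContinuousOn.intervalIntegrable
    rw [uIcc_of_le hab]
    exact (hψ'c.mul hvc).norm
  have hnint2 : IntervalIntegrable (fun ξ => ‖ψ' ξ‖ * B) volume a b := by
    apply ContinuousOn.intervalIntegrable
    rw [uIcc_of_le hab]
    exact hψ'c.norm.mul continuousOn_const
  have h2 : ‖∫ ξ in a..b, ψ' ξ * v ξ‖ ≤ B * ∫ ξ in a..b, ‖ψ' ξ‖ := by
    calc ‖∫ ξ in a..b, ψ' ξ * v ξ‖ ≤ ∫ ξ in a..b, ‖ψ' ξ * v ξ‖ :=
        intervalIntegral.norm_integral_le_integral_norm hab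
      _ ≤ ∫ ξ in a..b, ‖ψ' ξ‖ * B := by
          apply intervalIntegral.integral_mono_on hab hnint hnint2
          intro ξ hξ
          rw [norm_mul]
          exact mul_le_mul_of_nonneg_left (hvB ξ hξ) (norm_nonneg _)
      _ = B * ∫ ξ in a..b, ‖ψ' ξ‖ := by
          rw [intervalIntegral.integral_mul_const]
          ring
  have hV0 : 0 ≤ ∫ ξ in a..b, ‖ψ' ξ‖ :=
    intervalIntegral.integral_nonneg hab fun ξ _ => norm_nonneg _
  have hM0 : 0 ≤ M := le_trans (norm_nonneg _) (hM b (right_mem_Icc.2 hab))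
  show ‖∫ ξ in a..b, ψ ξ * F ξ‖ ≤ B * (M + ∫ ξ in a..b, ‖ψ' ξ‖)
  rw [hsplit]
  calc ‖ψ b * v b - ∫ ξ in a..b, ψ' ξ * v ξ‖
      ≤ ‖ψ b * v b‖ + ‖∫ ξ in a..b, ψ' ξ * v ξ‖ := norm_sub_le _ _
    _ ≤ M * B + B * ∫ ξ in a..b, ‖ψ' ξ‖ := by
        have h1 : ‖ψ b * v b‖ ≤ M * B := by
          rw [norm_mul]
          exact mul_le_mul (hM b (right_mem_Icc.2 hab)) (hvB b (right_mem_Icc.2 hab))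
            (norm_nonneg _) hM0
        linarith
    _ = B * (M + ∫ ξ in a..b, ‖ψ' ξ‖) := by ring

end VdC

theorem van_der_corput_second_order :
    ∃ C : ℝ, 0 < C ∧
      ∀ (a b lam : ℝ), a ≤ b → 0 < lam →
      ∀ (Φ : ℝ → ℝ) (ψ : ℝ → ℂ),
        ContDiffOn ℝ 2 Φ (Icc a b) →
        (∀ ξ ∈ Icc a b, lam ≤ |deriv (deriv Φ) ξ|) →
        ContDiffOn ℝ 1 ψ (Icc a b) →
        ‖∫ ξ in a..b, ψ ξ * Complex.exp (Complex.I * (Φ ξ : ℂ))‖ ≤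
          C * lam ^ (-(1 : ℝ) / 2) *
            ((⨆ ξ : Icc a b, ‖ψ ξ.1‖) + ∫ ξ in a..b, ‖deriv ψ ξ‖) := by
  refine ⟨12, by norm_num, ?_⟩
  intro a b lam hab hlam Φ ψ hΦ hdd hψ
  rcases eq_or_lt_of_le hab with rfl | hab'
  · rw [intervalIntegral.integral_same, norm_zero]
    have h1 : (0 : ℝ) ≤ ⨆ ξ : Icc a a, ‖ψ ξ.1‖ :=
      Real.iSup_nonneg fun ξ => norm_nonneg _
    have h2 : (0 : ℝ) ≤ lam ^ (-(1 : ℝ) / 2) := Real.rpow_nonneg hlam.le _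
    have h3 : (0 : ℝ) ≤ ∫ ξ in a..a, ‖deriv ψ ξ‖ := by
      rw [intervalIntegral.integral_same]
    positivity
  · have hu : UniqueDiffOn ℝ (Icc a b) := uniqueDiffOn_Icc hab'
    set φ1 := derivWithin Φ (Icc a b) with hφ1def
    set φ2 := derivWithin φ1 (Icc a b) with hφ2def
    set p1 := derivWithin ψ (Icc a b) with hp1def
    have hΦ1 : ContDiffOn ℝ 1 φ1 (Icc a b) := hΦ.derivWithin hu (by norm_num)
    have hφ1c : ContinuousOn φ1 (Icc a b) := hΦ1.continuousOn
    have hφ2c : ContinuousOn φ2 (Icc a b) := hΦ1.continuousOn_derivWithin hu le_rfl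
    have hp1c : ContinuousOn p1 (Icc a b) := hψ.continuousOn_derivWithin hu le_rfl
    have hΦc : ContinuousOn Φ (Icc a b) := hΦ.continuousOn
    have hψc : ContinuousOn ψ (Icc a b) := hψ.continuousOn
    have hIoo : ∀ ξ ∈ Ioo a b, Icc a b ∈ nhds ξ := fun ξ hξ => Icc_mem_nhds hξ.1 hξ.2
    have hd1 : ∀ ξ ∈ Ioo a b, HasDerivAt Φ (φ1 ξ) ξ := fun ξ hξ =>
      ((hΦ.differentiableOn (by norm_num) ξ
        (Ioo_subset_Icc_self hξ)).hasDerivWithinAt).hasDerivAt (hIoo ξ hξ)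
    have hd2 : ∀ ξ ∈ Ioo a b, HasDerivAt φ1 (φ2 ξ) ξ := fun ξ hξ =>
      ((hΦ1.differentiableOn (by norm_num) ξ
        (Ioo_subset_Icc_self hξ)).hasDerivWithinAt).hasDerivAt (hIoo ξ hξ)
    have hdψ : ∀ ξ ∈ Ioo a b, HasDerivAt ψ (p1 ξ) ξ := fun ξ hξ =>
      ((hψ.differentiableOn (by norm_num) ξ
        (Ioo_subset_Icc_self hξ)).hasDerivWithinAt).hasDerivAt (hIoo ξ hξ)
    have hlowIoo : ∀ ξ ∈ Ioo a b, lam ≤ |φ2 ξ| := by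
      intro ξ hξ
      have h1 : deriv Φ =ᶠ[nhds ξ] φ1 := by
        filter_upwards [isOpen_Ioo.mem_nhds hξ] with y hy
        exact (derivWithin_of_mem_nhds (hIoo y hy)).symm
      have h2 : deriv (deriv Φ) ξ = deriv φ1 ξ := h1.deriv_eq
      have h3 : deriv φ1 ξ = φ2 ξ := by
        rw [hφ2def]
        exact (derivWithin_of_mem_nhds (hIoo ξ hξ)).symm
      have := hdd ξ (Ioo_subset_Icc_self hξ)
      rwa [h2, h3] at this
    have hlow2 : ∀ ξ ∈ Icc a b, lam ≤ |φ2 ξ| :=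
      VdC.le_on_Icc_of_le_on_Ioo hab' hφ2c.abs hlowIoo
    set M := ⨆ ξ : Icc a b, ‖ψ ξ.1‖ with hMdef
    have hbdd : BddAbove (Set.range fun ξ : Icc a b => ‖ψ ξ.1‖) := by
      have hr : (Set.range fun ξ : Icc a b => ‖ψ ξ.1‖) =
          (fun ξ => ‖ψ ξ‖) '' (Icc a b) := by
        ext y
        constructor
        · rintro ⟨⟨x, hx⟩, rfl⟩; exact ⟨x, hx, rfl⟩
        · rintro ⟨x, hx, rfl⟩; exact ⟨⟨x, hx⟩, rfl⟩
      rw [hr]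
      exact (isCompact_Icc.image_of_continuousOn hψc.norm).bddAbove
    have hMle : ∀ ξ ∈ Icc a b, ‖ψ ξ‖ ≤ M := fun ξ hξ =>
      le_ciSup hbdd (⟨ξ, hξ⟩ : Icc a b)
    have hVeq : (∫ ξ in a..b, ‖deriv ψ ξ‖) = ∫ ξ in a..b, ‖p1 ξ‖ := by
      apply intervalIntegral.integral_congr_ae
      have hb' : ∀ᵐ x : ℝ, x ≠ b := by
        rw [MeasureTheory.ae_iff]
        simp only [ne_eq, not_not, setOf_eq_eq_singleton]
        exact Real.volume_singleton
      filter_upwards [hb'] with x hx hmem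
      rw [Set.uIoc_of_le hab] at hmem
      have hxIoo : x ∈ Ioo a b := ⟨hmem.1, lt_of_le_of_ne hmem.2 hx⟩
      congr 1
      exact (derivWithin_of_mem_nhds (hIoo x hxIoo)).symm
    rw [hVeq]
    exact VdC.lemC hab hlam hΦc hφ1c hφ2c hd1 hd2 hlow2 hψc hp1c hdψ hMle
end

section
/- If g : [0,T] → [0,∞) is continuous, nondecreasing, g(0) = 0, and satisfies g(T') ≤ A·√T'·e^{c·g(T')}·(1 + g(T')) for all T' ∈ [0,T], where A, c > 0, then there exist T₀ = T₀(A, c) > 0 and C₀ = C₀(A, c) such that g(T') ≤ C₀ for all T' ∈ [0, min(T, T₀)]. -/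
open Set Real

theorem bootstrap_a_priori_bound (A c : ℝ) (hA : 0 < A) (hc : 0 < c) :
    ∃ T₀ : ℝ, 0 < T₀ ∧ ∃ C₀ : ℝ,
      ∀ (T : ℝ) (g : ℝ → ℝ), 0 ≤ T →
        ContinuousOn g (Icc 0 T) →
        MonotoneOn g (Icc 0 T) →
        g 0 = 0 →
        (∀ t ∈ Icc 0 T, 0 ≤ g t) →
        (∀ T' ∈ Icc 0 T, g T' ≤ A * Real.sqrt T' * Real.exp (c * g T') * (1 + g T')) →
        ∀ t ∈ Icc 0 (min T T₀), g t ≤ C₀ := by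
  have hE : 0 < Real.exp c := Real.exp_pos c
  set a : ℝ := 1 / (4 * A * Real.exp c) with ha
  have ha0 : 0 < a := by positivity
  refine ⟨a ^ 2, by positivity, 1, ?_⟩
  intro T g hT hcont hmono hg0 hgnn hineq t ht
  by_contra hgt
  push_neg at hgt
  have ht0 : 0 ≤ t := ht.1
  have htT : t ≤ T := le_trans ht.2 (min_le_left _ _)
  have hta : t ≤ a ^ 2 := le_trans ht.2 (min_le_right _ _)
  have hsub : Icc (0 : ℝ) t ⊆ Icc 0 T := Icc_subset_Icc le_rfl htT
  have hIVT := intermediate_value_Icc ht0 (hcont.mono hsub)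
  have h1 : (1 : ℝ) ∈ Icc (g 0) (g t) := by
    rw [hg0]; exact ⟨zero_le_one, hgt.le⟩
  obtain ⟨s, hs, hgs⟩ := hIVT h1
  have hsT : s ∈ Icc (0 : ℝ) T := hsub hs
  have hkey := hineq s hsT
  rw [hgs] at hkey
  have hsqrt : Real.sqrt s ≤ a := by
    have : Real.sqrt s ≤ Real.sqrt (a ^ 2) :=
      Real.sqrt_le_sqrt (le_trans hs.2 hta)
    rwa [Real.sqrt_sq ha0.le] at this
  have : (1 : ℝ) ≤ A * a * Real.exp c * 2 := by
    calc (1 : ℝ) ≤ A * Real.sqrt s * Real.exp (c * 1) * (1 + 1) := hkey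
    _ = A * Real.sqrt s * Real.exp c * 2 := by ring_nf
    _ ≤ A * a * Real.exp c * 2 := by
        have := mul_le_mul_of_nonneg_left hsqrt hA.le
        nlinarith
  rw [ha] at this
  field_simp at this
  nlinarith [mul_pos hA hE]
end
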